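/- (Theorem 3.1, backward direction.) In the one-step MDP causal DAG satisfying assumptions A2–A4, if a_t and s^i_{t+1} are not d-separated by DAIS_t, then there is a direct edge a_t → s^i_{t+1}, i.e., s^i_{t+1} ∈ DAIS_{t+1}. -/

import Mathlib

/-- Undirected adjacency underlying a directed graph `E`. -/
def Adj {V : Type*} (E : V → V → Prop) (a b : V) : Prop := E a b ∨ E b a

/-- A simple path between `u` and `v` in the underlying undirected graph of the
digraph `E`, recorded as the list of visited vertices (at least two, no repeats,
consecutive vertices joined by an edge in one direction or the other). -/
def IsPath {V : Type*} (E : V → V → Prop) (u v : V) (p : List V) : Prop :=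
  List.Chain' (Adj E) p ∧ p.head? = some u ∧ p.getLast? = some v ∧
    p.Nodup ∧ 2 ≤ p.length

/-- The intermediate node `b`, whose neighbours on the path are `a` and `c`,
blocks the path with respect to the set `S`: either (i) `b ∈ S` and the edges of
the path at `b` form a chain (`a → b → c` or `a ← b ← c`) or a fork
(`a ← b → c`), or (ii) the edges at `b` form a collider (`a → b ← c`) and
neither `b` nor any descendant of `b` lies in `S`. -/
def BlocksAt {V : Type*} (E : V → V → Prop) (S : Set V) (a b c : V) : Prop :=
  (b ∈ S ∧ ((E a b ∧ E b c) ∨ (E c b ∧ E b a) ∨ (E b a ∧ E b c))) ∨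
  (E a b ∧ E c b ∧ ∀ w, Relation.ReflTransGen E b w → w ∉ S)

/-- A path (given as a list of vertices) is blocked by `S` if some intermediate
node of the path blocks it. -/
def Blocked {V : Type*} (E : V → V → Prop) (S : Set V) (p : List V) : Prop :=
  ∃ (p₁ : List V) (a b c : V) (p₂ : List V),
    p = p₁ ++ a :: b :: c :: p₂ ∧ BlocksAt E S a b c

/-- `u` and `v` are d-separated by `S` iff every path between them is blocked by `S`. -/
def DSep {V : Type*} (E : V → V → Prop) (S : Set V) (u v : V) : Prop :=
  ∀ p : List V, IsPath E u v p → Blocked E S p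

/-- A directed graph is a DAG: no directed cycles (hence in particular no self-loops). -/
def IsDAG {V : Type*} (E : V → V → Prop) : Prop :=
  ∀ v, ¬ Relation.TransGen E v v

/-- Nodes of the one-step MDP causal graph: for each (integer) timestep `t`
there is one action node `a_t` and `d` state nodes `s^1_t, …, s^d_t`. -/
inductive MDPNode (d : ℕ) : Type
  | action : ℤ → MDPNode d
  | state : ℤ → Fin d → MDPNode d

/-- The one-step MDP causal DAG satisfying assumptions A2–A4:
(A2) an edge `s^i_{t} → s^i_{t+1}` for every `i` and `t`;
(A3/A4) state-to-state edges only go from one timestep to the next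
(no long-range edges, no backward edges, no same-timestep edges);
action nodes `a_t` have outgoing edges only to state nodes at timestep `t+1`,
and have no incoming edges. -/
structure MDPGraph (d : ℕ) where
  E : MDPNode d → MDPNode d → Prop
  acyclic : IsDAG E
  a2 : ∀ (t : ℤ) (i : Fin d), E (.state t i) (.state (t + 1) i)
  state_step : ∀ (t t' : ℤ) (i j : Fin d), E (.state t i) (.state t' j) → t' = t + 1
  action_out : ∀ (t : ℤ) (v : MDPNode d), E (.action t) v → ∃ j : Fin d, v = .state (t + 1) j
  no_into_action : ∀ (v : MDPNode d) (t : ℤ), ¬ E v (.action t)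

/-- `DAIS_t`: the set of state nodes at time `t` with a direct edge from `a_{t-1}`. -/
def DAIS {d : ℕ} (G : MDPGraph d) (t : ℤ) : Set (MDPNode d) :=
  {v | ∃ i : Fin d, v = .state t i ∧ G.E (.action (t - 1)) (.state t i)}

namespace MDPAux

variable {d : ℕ}

/-- Time coordinate of a node. -/
def tau : MDPNode d → ℤ
  | .action t => t
  | .state t _ => t

@[simp] lemma tau_action (s : ℤ) : tau (MDPNode.action (d := d) s) = s := rfl

@[simp] lemma tau_state (s : ℤ) (j : Fin d) : tau (MDPNode.state s j) = s := rfl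

lemma tau_step (G : MDPGraph d) {u v : MDPNode d} (h : G.E u v) :
    tau v = tau u + 1 := by
  cases v with
  | action s => exact absurd h (G.no_into_action u s)
  | state s j =>
    cases u with
    | action r =>
      obtain ⟨j', hv⟩ := G.action_out r _ h
      simp [hv]
    | state r i' => simpa [tau_state] using G.state_step r s i' j h

lemma tau_mono (G : MDPGraph d) {u v : MDPNode d}
    (h : Relation.ReflTransGen G.E u v) : tau u ≤ tau v := by
  induction h with
  | refl => exact le_refl _
  | tail _ hbc ih => rw [tau_step G hbc]; omega

lemma chain'_rtg {R : MDPNode d → MDPNode d → Prop} :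
    ∀ (l : List (MDPNode d)) (x y : MDPNode d), List.Chain' R (x :: l) →
      (x :: l).getLast? = some y → Relation.ReflTransGen R x y := by
  intro l
  induction l with
  | nil =>
    intro x y _ hl
    simp only [List.getLast?_singleton, Option.some.injEq] at hl
    subst hl; exact Relation.ReflTransGen.refl
  | cons z l' ih =>
    intro x y hch hl
    rw [List.Chain', List.isChain_cons_cons] at hch
    exact Relation.ReflTransGen.head hch.1
      (ih z y hch.2 (by simpa using hl))

/-- Either the whole path is a forward directed chain, or it contains a
collider `x → c ← y` whose middle node `c` is a descendant of `b`. -/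
lemma peak (G : MDPGraph d) :
    ∀ (l : List (MDPNode d)) (a b : MDPNode d), G.E a b →
      List.Chain' (Adj G.E) (b :: l) →
      List.Chain' G.E (a :: b :: l) ∨
      ∃ p₁ x c y p₂, a :: b :: l = p₁ ++ x :: c :: y :: p₂ ∧ G.E x c ∧ G.E y c ∧
        Relation.ReflTransGen G.E b c := by
  intro l
  induction l with
  | nil =>
    intro a b hab _
    left
    simp [List.Chain', List.isChain_cons_cons, hab]
  | cons b' l' ih =>
    intro a b hab hch
    rw [List.Chain', List.isChain_cons_cons] at hch
    rcases hch with ⟨hadj, hch'⟩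
    rcases hadj with hbb | hbb
    · rcases ih b b' hbb hch' with hF | ⟨p₁, x, c, y, p₂, heq, hxc, hyc, hrt⟩
      · left
        rw [List.Chain', List.isChain_cons_cons]
        exact ⟨hab, hF⟩
      · right
        exact ⟨a :: p₁, x, c, y, p₂, by rw [List.cons_append, ← heq], hxc, hyc,
          Relation.ReflTransGen.head hbb hrt⟩
    · right
      exact ⟨[], a, b, b', l', rfl, hab, hbb, Relation.ReflTransGen.refl⟩

lemma blocked_of_no_edge (G : MDPGraph d) (t : ℤ) (i : Fin d)
    (hne : ¬ G.E (.action t) (.state (t + 1) i)) :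
    DSep G.E (DAIS G t) (.action t) (.state (t + 1) i) := by
  rintro p ⟨hch, hhead, hlast, hnd, hlen⟩
  match p with
  | [] => simp at hhead
  | [u] => simp at hlen
  | u :: b :: l =>
    simp only [List.head?_cons, Option.some.injEq] at hhead
    subst hhead
    -- first edge must be forward
    have hadj : Adj G.E (.action t) b := (List.isChain_cons_cons.mp hch).1
    have hch2 : List.Chain' (Adj G.E) (b :: l) := (List.isChain_cons_cons.mp hch).2
    have hab : G.E (.action t) b := by
      rcases hadj with h' | h'
      · exact h'
      · exact absurd h' (G.no_into_action b t)
    obtain ⟨j, hbj⟩ := G.action_out t b hab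
    rcases peak G l (.action t) b hab hch2 with hF |
      ⟨p₁, x, c, y, p₂, heq, hxc, hyc, hrt⟩
    · exfalso
      -- all-forward chain: forces l = [] and the direct edge
      cases l with
      | nil =>
        simp only [List.getLast?_cons_cons, List.getLast?_singleton,
          Option.some.injEq] at hlast
        subst hlast
        exact hne hab
      | cons c l' =>
        rw [List.Chain', List.isChain_cons_cons, List.isChain_cons_cons] at hF
        have hbc : G.E b c := hF.2.1
        have hrt : Relation.ReflTransGen G.E c (.state (t + 1) i) :=
          chain'_rtg l' c _ hF.2.2 (by simpa using hlast)
        have h1 := tau_step G hab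
        have h2 := tau_step G hbc
        have h3 := tau_mono G hrt
        simp only [tau_action, tau_state] at h1 h3
        omega
    · -- collider: it blocks the path
      refine ⟨p₁, x, c, y, p₂, heq, Or.inr ⟨hxc, hyc, ?_⟩⟩
      intro w hw hwS
      obtain ⟨k, hwk, -⟩ := hwS
      have h1 := tau_step G hab
      have h2 := tau_mono G (hrt.trans hw)
      rw [hwk] at h2
      simp only [tau_action, tau_state] at h1 h2
      omega

end MDPAux

/-- Theorem 3.1, backward direction: in the one-step MDP causal DAG (A2–A4), if
`a_t` and `s^i_{t+1}` are not d-separated by `DAIS_t`, then there is a direct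
edge `a_t → s^i_{t+1}`, i.e. `s^i_{t+1} ∈ DAIS_{t+1}`. -/
theorem dais_backward {d : ℕ} (G : MDPGraph d) (t : ℤ) (i : Fin d)
    (h : ¬ DSep G.E (DAIS G t) (.action t) (.state (t + 1) i)) :
    G.E (.action t) (.state (t + 1) i) ∧
      MDPNode.state (t + 1) i ∈ DAIS G (t + 1) := by
  have hedge : G.E (.action t) (.state (t + 1) i) := by
    by_contra hne
    exact h (MDPAux.blocked_of_no_edge G t i hne)
  refine ⟨hedge, i, rfl, ?_⟩
  simpa using hedge
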